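/- Let (X,d) be a compact metric space with more than one point and let f : X → X be a surjective continuous map with the specification property. Then there exist ε > 0 and a sequence of points {z_n}_{n=1}^∞ ⊆ X such that inf_{i ≥ 0} d(fⁱ(z_n), f^{i+n}(z_n)) ≥ ε for every integer n ≥ 1. -/

import Mathlib

open Filter Set Topology

set_option linter.unusedSectionVars false
set_option maxHeartbeats 1000000

/-- The specification property of Bowen: for every `ε > 0` there is `N > 0` such that any
finite collection of orbit segments, spaced at least `N` apart in time, can be `ε`-traced
by the orbit of a single point. -/
def SpecProp {X : Type*} [MetricSpace X] (f : X → X) : Prop :=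
  ∀ ε : ℝ, 0 < ε → ∃ N : ℕ, 0 < N ∧
    ∀ (s : ℕ) (hs : 2 ≤ s), ∀ (y : Fin s → X) (j k : Fin s → ℕ),
      j ⟨0, by omega⟩ = 0 →
      (∀ m, j m ≤ k m) →
      (∀ m : Fin s, ∀ h : (m : ℕ) + 1 < s, k m + N ≤ j ⟨(m : ℕ) + 1, h⟩) →
      ∃ x : X, ∀ m : Fin s, ∀ i : ℕ, j m ≤ i → i ≤ k m →
        dist (f^[i] x) (f^[i] (y m)) < ε

section Aux
variable {X : Type*} [MetricSpace X] [CompactSpace X]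

private lemma backward_one (f : X → X) (hf : Continuous f) (c : ℕ) (s : ℝ) (hs : 0 < s) :
    ∃ ρ : ℝ, 0 < ρ ∧ ∀ x y : X, s ≤ dist (f^[c] x) (f^[c] y) → ρ ≤ dist x y := by
  by_cases hA : ∃ xy : X × X, s ≤ dist (f^[c] xy.1) (f^[c] xy.2)
  · have hcont : Continuous fun xy : X × X => dist (f^[c] xy.1) (f^[c] xy.2) :=
      ((hf.iterate c).comp continuous_fst).dist ((hf.iterate c).comp continuous_snd)
    have hclosed : IsClosed {xy : X × X | s ≤ dist (f^[c] xy.1) (f^[c] xy.2)} :=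
      isClosed_le continuous_const hcont
    have hcpt : IsCompact {xy : X × X | s ≤ dist (f^[c] xy.1) (f^[c] xy.2)} :=
      hclosed.isCompact
    obtain ⟨w, hw⟩ := hA
    obtain ⟨m, hmA, hmin⟩ := hcpt.exists_isMinOn ⟨w, hw⟩
      ((continuous_dist).continuousOn)
    refine ⟨dist m.1 m.2, ?_, ?_⟩
    · rw [dist_pos]
      intro hEq
      have h0 : dist (f^[c] m.1) (f^[c] m.2) = 0 := by rw [hEq, dist_self]
      have hm : s ≤ dist (f^[c] m.1) (f^[c] m.2) := hmA
      linarith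
    · intro x y hxy
      exact hmin (show (x, y) ∈ _ from hxy)
  · push_neg at hA
    exact ⟨s, hs, fun x y h => absurd h (not_le.2 (hA (x, y)))⟩

private lemma backward_upto (f : X → X) (hf : Continuous f) (W : ℕ) (s : ℝ) (hs : 0 < s) :
    ∃ ρ : ℝ, 0 < ρ ∧ ρ ≤ s ∧ ∀ c ≤ W, ∀ x y : X,
      s ≤ dist (f^[c] x) (f^[c] y) → ρ ≤ dist x y := by
  induction W with
  | zero =>
    refine ⟨s, hs, le_rfl, ?_⟩
    intro c hc x y h
    interval_cases c
    simpa using h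
  | succ W ih =>
    obtain ⟨ρ, hρ, hρs, hρle⟩ := ih
    obtain ⟨ρ', hρ', h'⟩ := backward_one f hf (W + 1) s hs
    refine ⟨min ρ ρ', lt_min hρ hρ', (min_le_left _ _).trans hρs, ?_⟩
    intro c hc x y h
    rcases Nat.lt_succ_iff_lt_or_eq.mp (Nat.lt_succ_of_le hc) with h1 | h1
    · exact (min_le_left _ _).trans (hρle c (Nat.lt_succ_iff.mp h1) x y h)
    · subst h1
      exact (min_le_right _ _).trans (h' x y h)

private lemma coloring (Δ : ℕ) (hΔ : 0 < Δ) :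
    ∃ σ : ℕ → Bool, ∀ k, σ (k + Δ) ≠ σ k := by
  obtain ⟨t, d, hd, hΔeq⟩ := Nat.exists_eq_two_pow_mul_odd hΔ.ne'
  refine ⟨fun k => decide ((k / 2 ^ t) % 2 = 1), fun k => ?_⟩
  have h2t : 0 < 2 ^ t := Nat.pow_pos (by norm_num)
  have hdiv : (k + Δ) / 2 ^ t = k / 2 ^ t + d := by
    rw [hΔeq, Nat.add_mul_div_left _ _ h2t]
  obtain ⟨e, he⟩ := hd
  simp only [ne_eq, decide_eq_decide, hdiv, he]
  omega

private lemma limit_exists (f : X → X) (hf : Continuous f) (g : ℕ → ℕ → X) (T R : ℕ) (ε : ℝ)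
    (h : ∀ K : ℕ, ∃ x : X, ∀ m ≤ K, ∀ r ≤ R, dist (f^[m * T + r] x) (g m r) < ε) :
    ∃ z : X, ∀ m : ℕ, ∀ r ≤ R, dist (f^[m * T + r] z) (g m r) ≤ ε := by
  choose x hx using h
  obtain ⟨z, -, φ, hφ, hz⟩ := isCompact_univ.tendsto_subseq (x := x) (fun n => mem_univ _)
  refine ⟨z, fun m r hr => ?_⟩
  have h1 : Tendsto (fun K => f^[m * T + r] (x (φ K))) atTop (𝓝 (f^[m * T + r] z)) :=
    ((hf.iterate _).tendsto z).comp hz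
  have h2 : Tendsto (fun K => dist (f^[m * T + r] (x (φ K))) (g m r)) atTop
      (𝓝 (dist (f^[m * T + r] z) (g m r))) := h1.dist tendsto_const_nhds
  refine le_of_tendsto h2 ?_
  filter_upwards [eventually_ge_atTop m] with K hK
  exact (hx (φ K) m (hK.trans hφ.le_apply) r hr).le

private lemma spec_track (f : X → X) (hsurj : Function.Surjective f) (ε : ℝ) (N : ℕ)
    (hN : ∀ (s : ℕ) (hs : 2 ≤ s), ∀ (y : Fin s → X) (j k : Fin s → ℕ),
      j ⟨0, by omega⟩ = 0 → (∀ m, j m ≤ k m) →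
      (∀ m : Fin s, ∀ h : (m : ℕ) + 1 < s, k m + N ≤ j ⟨(m : ℕ) + 1, h⟩) →
      ∃ x : X, ∀ m : Fin s, ∀ i : ℕ, j m ≤ i → i ≤ k m →
        dist (f^[i] x) (f^[i] (y m)) < ε)
    (T R : ℕ) (hR : R + N ≤ T) (tg : ℕ → X) (K : ℕ) :
    ∃ x : X, ∀ m ≤ K, ∀ r ≤ R, dist (f^[m * T + r] x) (f^[r] (tg m)) < ε := by
  have hy : ∀ m : ℕ, ∃ y : X, f^[m * T] y = tg m := fun m => (hsurj.iterate (m * T)) (tg m)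
  choose y hy using hy
  obtain ⟨x, hx⟩ := hN (K + 2) (by omega) (fun m => y (m : ℕ))
    (fun m => (m : ℕ) * T) (fun m => (m : ℕ) * T + R)
    (by simp) (fun m => Nat.le_add_right _ _)
    (by
      intro m h
      simp only
      rw [add_mul, one_mul]
      omega)
  refine ⟨x, fun m hm r hr => ?_⟩
  have hmlt : m < K + 2 := by omega
  have h2 : f^[m * T + r] (y m) = f^[r] (tg m) := by
    rw [show m * T + r = r + m * T by omega, Function.iterate_add_apply, hy m]
  have := hx ⟨m, hmlt⟩ (m * T + r) (by simp) (by simpa using hr)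
  simp only at this
  rwa [h2] at this

private lemma spec_pins3 (f : X → X) (hsurj : Function.Surjective f) (ε : ℝ) (N : ℕ)
    (hN : ∀ (s : ℕ) (hs : 2 ≤ s), ∀ (y : Fin s → X) (j k : Fin s → ℕ),
      j ⟨0, by omega⟩ = 0 → (∀ m, j m ≤ k m) →
      (∀ m : Fin s, ∀ h : (m : ℕ) + 1 < s, k m + N ≤ j ⟨(m : ℕ) + 1, h⟩) →
      ∃ x : X, ∀ m : Fin s, ∀ i : ℕ, j m ≤ i → i ≤ k m →
        dist (f^[i] x) (f^[i] (y m)) < ε)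
    (a b : ℕ) (ha : N ≤ a) (hab : a + N ≤ b) (w₀ w₁ w₂ : X) :
    ∃ x : X, dist x w₀ < ε ∧ dist (f^[a] x) w₁ < ε ∧ dist (f^[b] x) w₂ < ε := by
  obtain ⟨y₁, hy₁⟩ := (hsurj.iterate a) w₁
  obtain ⟨y₂, hy₂⟩ := (hsurj.iterate b) w₂
  have key := hN 3 (by omega)
    (fun m => if (m : ℕ) = 0 then w₀ else if (m : ℕ) = 1 then y₁ else y₂)
    (fun m => if (m : ℕ) = 0 then 0 else if (m : ℕ) = 1 then a else b)
    (fun m => if (m : ℕ) = 0 then 0 else if (m : ℕ) = 1 then a else b)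
    (by norm_num) (fun m => le_rfl) ?_
  · obtain ⟨x, hx⟩ := key
    refine ⟨x, ?_, ?_, ?_⟩
    · have := hx ⟨0, by omega⟩ 0 (by norm_num) (by norm_num)
      simpa using this
    · have := hx ⟨1, by omega⟩ a (by norm_num) (by norm_num)
      norm_num at this
      rwa [hy₁] at this
    · have := hx ⟨2, by omega⟩ b (by norm_num) (by norm_num)
      norm_num at this
      rwa [hy₂] at this
  · intro m h
    rcases m with ⟨mv, hmv⟩
    interval_cases mv
    · norm_num
      omega
    · norm_num
      omega
    · exact absurd h (by norm_num)

end Aux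

theorem exists_uniform_sequence_separated_from_shifted_orbit
    {X : Type*} [MetricSpace X] [CompactSpace X] [Nontrivial X]
    (f : X → X) (hf : Continuous f) (hsurj : Function.Surjective f)
    (hspec : SpecProp f) :
    ∃ ε : ℝ, 0 < ε ∧ ∃ z : ℕ → X, ∀ n : ℕ, 1 ≤ n →
      ε ≤ ⨅ i : ℕ, dist (f^[i] (z n)) (f^[i + n] (z n)) := by
  obtain ⟨p, q, hpq⟩ := exists_pair_ne X
  have hD : 0 < dist p q := dist_pos.2 hpq
  obtain ⟨N, hNpos, hN⟩ := hspec (dist p q / 8) (by positivity)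
  set T := 40 * N with hTdef
  set R := 39 * N with hRdef
  have hTpos : 0 < T := by omega
  have hRN : R + N ≤ T := by omega
  have hTN : T ≤ N * T := Nat.le_mul_of_pos_left T hNpos
  set ee : ℝ := dist p q / 8 with heedef
  set sstar : ℝ := dist p q / (2 * T) with hsstardef
  have hTcast : (1 : ℝ) ≤ (T : ℝ) := by exact_mod_cast hTpos
  have hsstarpos : 0 < sstar := by
    rw [hsstardef]
    positivity
  have hshalf : sstar ≤ dist p q / 2 := by
    rw [hsstardef, div_le_div_iff₀ (by positivity) (by norm_num)]
    nlinarith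
  obtain ⟨ρ, hρpos, hρs, hρ⟩ := backward_upto f hf (T + N * T) sstar hsstarpos
  -- combination helper
  have hcomb : ∀ P Q A B zj zjn : X, dist p q ≤ dist P Q →
      dist A P ≤ ee → dist B Q ≤ ee → dist zj A ≤ ee → dist zjn B ≤ ee →
      sstar ≤ dist zj zjn := by
    intro P Q A B zj zjn h0 h1 h2 h3 h4
    have t1 := dist_triangle4 P A B Q
    have t2 := dist_triangle4 A zj zjn B
    have c1 : dist P A = dist A P := dist_comm _ _
    have c2 : dist A zj = dist zj A := dist_comm _ _
    rw [heedef] at h1 h2 h3 h4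
    linarith
  -- the main pointwise claim
  have main : ∀ n : ℕ, 1 ≤ n → ∃ z : X, ∀ i : ℕ, ρ ≤ dist (f^[i] z) (f^[i + n] z) := by
    intro n hn
    have key : ∃ z : X, ∀ i : ℕ, ∃ c, c ≤ T + N * T ∧
        sstar ≤ dist (f^[i + c] z) (f^[i + c + n] z) := by
      set κ := n / T with hκdef
      set aa := n % T with haadef
      have hn2 : κ * T + aa = n := by rw [mul_comm]; exact Nat.div_add_mod n T
      have hmodn : aa < T := Nat.mod_lt _ hTpos
      by_cases hc1 : n ≤ N
      · -- Case 1: small n, telescoping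
        have hgdvd1 := Nat.gcd_dvd_left n T
        have hgdvd2 := Nat.gcd_dvd_right n T
        set g := Nat.gcd n T with hgdef
        have hgpos : 0 < g := Nat.gcd_pos_of_pos_right _ hTpos
        set k₀ := T / g with hk₀def
        set Δ := n / g with hΔdef
        have hΔpos : 0 < Δ := Nat.div_pos (Nat.le_of_dvd (by omega) hgdvd1) hgpos
        have hk₀T : k₀ ≤ T := Nat.div_le_self _ _
        have hΔN : Δ ≤ N := le_trans (Nat.div_le_self _ _) hc1
        have hmul : k₀ * n = Δ * T := by
          obtain ⟨A, hA⟩ := hgdvd1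
          obtain ⟨B, hB⟩ := hgdvd2
          have h1 : Δ = A := by rw [hΔdef, hA, Nat.mul_div_cancel_left A hgpos]
          have h2 : k₀ = B := by rw [hk₀def, hB, Nat.mul_div_cancel_left B hgpos]
          rw [h1, h2, hA, hB]; ring
        obtain ⟨σ, hσ⟩ := coloring Δ hΔpos
        set tg : ℕ → X := fun kk => if σ kk then q else p with htgdef
        obtain ⟨z, hz⟩ := limit_exists f hf (fun m r => f^[r] (tg m)) T R ee
          (fun K => spec_track f hsurj ee N hN T R hRN tg K)
        refine ⟨z, fun i => ?_⟩
        by_contra hcon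
        push_neg at hcon
        set K1 := i / T with hK1def
        have hdm : T * K1 + i % T = i := Nat.div_add_mod i T
        have hmod : i % T < T := Nat.mod_lt _ hTpos
        have hE1 : (K1 + 1) * T = T * K1 + T := by ring
        have hle1 : i ≤ (K1 + 1) * T := by omega
        have hle2 : (K1 + 1) * T ≤ i + T := by omega
        have hp0 : dist (f^[(K1 + 1) * T] z) (tg (K1 + 1)) ≤ ee := by
          have := hz (K1 + 1) 0 (Nat.zero_le R)
          simpa using this
        have hp1 : dist (f^[(K1 + 1) * T + k₀ * n] z) (tg (K1 + 1 + Δ)) ≤ ee := by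
          have h0 := hz (K1 + 1 + Δ) 0 (Nat.zero_le R)
          have hE2 : (K1 + 1 + Δ) * T = (K1 + 1) * T + Δ * T := by ring
          have hidx : (K1 + 1 + Δ) * T + 0 = (K1 + 1) * T + k₀ * n := by omega
          rw [hidx] at h0
          simpa using h0
        have hsum : dist (f^[(K1 + 1) * T] z) (f^[(K1 + 1) * T + k₀ * n] z)
            ≤ (k₀ : ℝ) * sstar := by
          have h0 := dist_le_range_sum_dist (fun t => f^[(K1 + 1) * T + t * n] z) k₀
          simp only [Nat.zero_mul, Nat.add_zero] at h0
          have hterm : ∀ t ∈ Finset.range k₀,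
              dist (f^[(K1 + 1) * T + t * n] z) (f^[(K1 + 1) * T + (t + 1) * n] z) ≤ sstar := by
            intro t ht
            rw [Finset.mem_range] at ht
            have htn : (t + 1) * n ≤ k₀ * n := Nat.mul_le_mul_right _ (by omega)
            have hNT2 : Δ * T ≤ N * T := Nat.mul_le_mul_right _ hΔN
            have hE3 : (t + 1) * n = t * n + n := by ring
            have hcle : (K1 + 1) * T + t * n - i ≤ T + N * T := by omega
            have h1 : i + ((K1 + 1) * T + t * n - i) = (K1 + 1) * T + t * n := by omega
            have h2 : (K1 + 1) * T + t * n + n = (K1 + 1) * T + (t + 1) * n := by omega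
            have := (hcon _ hcle).le
            rwa [h1, h2] at this
          calc dist (f^[(K1 + 1) * T] z) (f^[(K1 + 1) * T + k₀ * n] z)
              ≤ ∑ t ∈ Finset.range k₀,
                dist (f^[(K1 + 1) * T + t * n] z) (f^[(K1 + 1) * T + (t + 1) * n] z) := h0
            _ ≤ ∑ _t ∈ Finset.range k₀, sstar := Finset.sum_le_sum hterm
            _ = (k₀ : ℝ) * sstar := by
                rw [Finset.sum_const, Finset.card_range, nsmul_eq_mul]
        have hfar : dist p q ≤ dist (tg (K1 + 1)) (tg (K1 + 1 + Δ)) := by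
          have hne := hσ (K1 + 1)
          rw [htgdef]
          cases hb1 : σ (K1 + 1) <;> cases hb2 : σ (K1 + 1 + Δ) <;>
            rw [hb1, hb2] at hne <;> simp_all [dist_comm]
        have htri := dist_triangle4 (tg (K1 + 1)) (f^[(K1 + 1) * T] z)
          (f^[(K1 + 1) * T + k₀ * n] z) (tg (K1 + 1 + Δ))
        have hcd : dist (tg (K1 + 1)) (f^[(K1 + 1) * T] z)
            = dist (f^[(K1 + 1) * T] z) (tg (K1 + 1)) := dist_comm _ _
        have hk₀cast : (k₀ : ℝ) * sstar ≤ (T : ℝ) * sstar := by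
          apply mul_le_mul_of_nonneg_right _ hsstarpos.le
          exact_mod_cast hk₀T
        have hTss : (T : ℝ) * sstar = dist p q / 2 := by
          rw [hsstardef]
          field_simp
        rw [heedef] at hp0 hp1
        linarith
      · -- n > N
        by_cases hc2 : N < aa ∧ aa ≤ R
        · -- Case 2: middle residue, single pinned point
          obtain ⟨haaN, haaR⟩ := hc2
          set Xv := T - aa with hXvdef
          have hXvN : N ≤ Xv := by omega
          have hXvR : Xv ≤ R := by omega
          obtain ⟨w, hw0, hwX, -⟩ := spec_pins3 f hsurj ee N hN Xv (Xv + N)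
            hXvN (le_refl _) q p p
          obtain ⟨z, hz⟩ := limit_exists f hf (fun m r => f^[r] ((fun _ => w) m)) T R ee
            (fun K => spec_track f hsurj ee N hN T R hRN (fun _ => w) K)
          refine ⟨z, fun i => ?_⟩
          set K1 := i / T with hK1def
          have hdm : T * K1 + i % T = i := Nat.div_add_mod i T
          have hmod : i % T < T := Nat.mod_lt _ hTpos
          have hE1 : (K1 + 1) * T = T * K1 + T := by ring
          have hE2 : (K1 + κ + 2) * T = T * K1 + κ * T + 2 * T := by ring
          refine ⟨(K1 + 1) * T + Xv - i, by omega, ?_⟩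
          have h1 : i + ((K1 + 1) * T + Xv - i) = (K1 + 1) * T + Xv := by omega
          have h2 : (K1 + 1) * T + Xv + n = (K1 + κ + 2) * T + 0 := by omega
          rw [h1, h2]
          have e1 : dist (f^[(K1 + 1) * T + Xv] z) (f^[Xv] w) ≤ ee := hz (K1 + 1) Xv hXvR
          have e2 : dist (f^[(K1 + κ + 2) * T + 0] z) w ≤ ee := by
            have := hz (K1 + κ + 2) 0 (Nat.zero_le R)
            simpa using this
          exact hcomb p q (f^[Xv] w) w _ _ le_rfl hwX.le hw0.le e1 e2
        · by_cases hc3 : aa ≤ N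
          · -- Case 3: small residue, large n
            have hκpos : 0 < κ := by
              rcases Nat.eq_zero_or_pos κ with h | h
              · rw [h, zero_mul] at hn2; omega
              · exact h
            obtain ⟨u, -, hu1, hu2⟩ := spec_pins3 f hsurj ee N hN N (2 * N + 2 * aa)
              le_rfl (by omega) p p q
            obtain ⟨v, -, hv1, hv2⟩ := spec_pins3 f hsurj ee N hN (N + aa) (2 * N + aa)
              (by omega) (by omega) p q p
            obtain ⟨σ, hσ⟩ := coloring κ hκpos
            set tg : ℕ → X := fun kk => if σ kk then v else u with htgdef
            obtain ⟨z, hz⟩ := limit_exists f hf (fun m r => f^[r] (tg m)) T R ee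
              (fun K => spec_track f hsurj ee N hN T R hRN tg K)
            refine ⟨z, fun i => ?_⟩
            set K1 := i / T with hK1def
            have hdm : T * K1 + i % T = i := Nat.div_add_mod i T
            have hmod : i % T < T := Nat.mod_lt _ hTpos
            have hE1 : (K1 + 1) * T = T * K1 + T := by ring
            have hE2 : (K1 + 1 + κ) * T = T * K1 + κ * T + T := by ring
            have hne := hσ (K1 + 1)
            cases hb : σ (K1 + 1)
            · -- target u at segment K1+1, v at K1+1+κ
              have hb2 : σ (K1 + 1 + κ) = true := by
                rw [hb] at hne
                simpa using hne
              refine ⟨(K1 + 1) * T + N - i, by omega, ?_⟩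
              have h1 : i + ((K1 + 1) * T + N - i) = (K1 + 1) * T + N := by omega
              have h2 : (K1 + 1) * T + N + n = (K1 + 1 + κ) * T + (N + aa) := by omega
              rw [h1, h2]
              have e1 : dist (f^[(K1 + 1) * T + N] z) (f^[N] (tg (K1 + 1))) ≤ ee :=
                hz (K1 + 1) N (by omega)
              have e2 : dist (f^[(K1 + 1 + κ) * T + (N + aa)] z)
                  (f^[N + aa] (tg (K1 + 1 + κ))) ≤ ee := hz (K1 + 1 + κ) (N + aa) (by omega)
              rw [htgdef] at e1 e2
              simp only [hb, hb2, if_true, if_false, Bool.false_eq_true] at e1 e2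
              exact hcomb p q (f^[N] u) (f^[N + aa] v) _ _ le_rfl hu1.le hv1.le e1 e2
            · -- target v at segment K1+1, u at K1+1+κ
              have hb2 : σ (K1 + 1 + κ) = false := by
                rw [hb] at hne
                simpa using hne
              refine ⟨(K1 + 1) * T + (2 * N + aa) - i, by omega, ?_⟩
              have h1 : i + ((K1 + 1) * T + (2 * N + aa) - i) = (K1 + 1) * T + (2 * N + aa) := by
                omega
              have h2 : (K1 + 1) * T + (2 * N + aa) + n
                  = (K1 + 1 + κ) * T + (2 * N + 2 * aa) := by omega
              rw [h1, h2]
              have e1 : dist (f^[(K1 + 1) * T + (2 * N + aa)] z)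
                  (f^[2 * N + aa] (tg (K1 + 1))) ≤ ee := hz (K1 + 1) (2 * N + aa) (by omega)
              have e2 : dist (f^[(K1 + 1 + κ) * T + (2 * N + 2 * aa)] z)
                  (f^[2 * N + 2 * aa] (tg (K1 + 1 + κ))) ≤ ee :=
                hz (K1 + 1 + κ) (2 * N + 2 * aa) (by omega)
              rw [htgdef] at e1 e2
              simp only [hb, hb2, if_true, if_false, Bool.false_eq_true] at e1 e2
              exact hcomb p q (f^[2 * N + aa] v) (f^[2 * N + 2 * aa] u) _ _ le_rfl
                hv2.le hu2.le e1 e2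
          · -- Case 4: large residue
            have haaR : R < aa := by omega
            set Xv := T - aa with hXvdef
            have hXv1 : 1 ≤ Xv := by omega
            have hXvN : Xv ≤ N := by omega
            obtain ⟨u, -, hu1, hu2⟩ := spec_pins3 f hsurj ee N hN (Xv + N) (3 * N)
              (by omega) (by omega) p p q
            obtain ⟨v, -, hv1, hv2⟩ := spec_pins3 f hsurj ee N hN N (Xv + 3 * N)
              le_rfl (by omega) p q p
            obtain ⟨σ, hσ⟩ := coloring (κ + 1) (Nat.succ_pos κ)
            set tg : ℕ → X := fun kk => if σ kk then v else u with htgdef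
            obtain ⟨z, hz⟩ := limit_exists f hf (fun m r => f^[r] (tg m)) T R ee
              (fun K => spec_track f hsurj ee N hN T R hRN tg K)
            refine ⟨z, fun i => ?_⟩
            set K1 := i / T with hK1def
            have hdm : T * K1 + i % T = i := Nat.div_add_mod i T
            have hmod : i % T < T := Nat.mod_lt _ hTpos
            have hE1 : (K1 + 1) * T = T * K1 + T := by ring
            have hE2 : (K1 + κ + 2) * T = T * K1 + κ * T + 2 * T := by ring
            have hne := hσ (K1 + 1)
            have hidx : K1 + 1 + (κ + 1) = K1 + κ + 2 := by omega
            rw [hidx] at hne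
            cases hb : σ (K1 + 1)
            · -- u at K1+1, v at K1+κ+2
              have hb2 : σ (K1 + κ + 2) = true := by
                rw [hb] at hne
                simpa using hne
              refine ⟨(K1 + 1) * T + (Xv + N) - i, by omega, ?_⟩
              have h1 : i + ((K1 + 1) * T + (Xv + N) - i) = (K1 + 1) * T + (Xv + N) := by omega
              have h2 : (K1 + 1) * T + (Xv + N) + n = (K1 + κ + 2) * T + N := by omega
              rw [h1, h2]
              have e1 : dist (f^[(K1 + 1) * T + (Xv + N)] z)
                  (f^[Xv + N] (tg (K1 + 1))) ≤ ee := hz (K1 + 1) (Xv + N) (by omega)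
              have e2 : dist (f^[(K1 + κ + 2) * T + N] z) (f^[N] (tg (K1 + κ + 2))) ≤ ee :=
                hz (K1 + κ + 2) N (by omega)
              rw [htgdef] at e1 e2
              simp only [hb, hb2, if_true, if_false, Bool.false_eq_true] at e1 e2
              exact hcomb p q (f^[Xv + N] u) (f^[N] v) _ _ le_rfl hu1.le hv1.le e1 e2
            · -- v at K1+1, u at K1+κ+2
              have hb2 : σ (K1 + κ + 2) = false := by
                rw [hb] at hne
                simpa using hne
              refine ⟨(K1 + 1) * T + (Xv + 3 * N) - i, by omega, ?_⟩
              have h1 : i + ((K1 + 1) * T + (Xv + 3 * N) - i)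
                  = (K1 + 1) * T + (Xv + 3 * N) := by omega
              have h2 : (K1 + 1) * T + (Xv + 3 * N) + n
                  = (K1 + κ + 2) * T + 3 * N := by omega
              rw [h1, h2]
              have e1 : dist (f^[(K1 + 1) * T + (Xv + 3 * N)] z)
                  (f^[Xv + 3 * N] (tg (K1 + 1))) ≤ ee := hz (K1 + 1) (Xv + 3 * N) (by omega)
              have e2 : dist (f^[(K1 + κ + 2) * T + 3 * N] z)
                  (f^[3 * N] (tg (K1 + κ + 2))) ≤ ee := hz (K1 + κ + 2) (3 * N) (by omega)
              rw [htgdef] at e1 e2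
              simp only [hb, hb2, if_true, if_false, Bool.false_eq_true] at e1 e2
              exact hcomb p q (f^[Xv + 3 * N] v) (f^[3 * N] u) _ _ le_rfl hv2.le hu2.le e1 e2
    obtain ⟨z, hz⟩ := key
    refine ⟨z, fun i => ?_⟩
    obtain ⟨c, hc, hcs⟩ := hz i
    apply hρ c hc
    rw [← Function.iterate_add_apply f c i, ← Function.iterate_add_apply f c (i + n)]
    have h1 : c + i = i + c := by omega
    have h2 : c + (i + n) = i + c + n := by omega
    rw [h1, h2]
    exact hcs
  refine ⟨ρ, hρpos, fun n => if h : 1 ≤ n then (main n h).choose else (main 1 le_rfl).choose, ?_⟩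
  intro n hn
  simp only [dif_pos hn]
  exact le_ciInf fun i => (main n hn).choose_spec i
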